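/- With f and g as in the main theorem, for every integer n ≥ 14 and every r ∈ {4, 5, 6} with n - r - 3 ≥ 1: binom(r-1,2)·f(n-r) + r·g(n-r-2) + g(n-r-3) < f(n). -/
import Mathlib


/-- `g n = 10 ^ (n/5)` (real power). -/
noncomputable def g (n : ℕ) : ℝ := (10 : ℝ) ^ ((n : ℝ) / 5)

/-- The four-piece function `f` from the main theorem. -/
noncomputable def f (n : ℕ) : ℝ :=
  if n ≤ 8 then (n.choose 2 : ℝ)
  else if n ≤ 13 then
    ((n / 2).choose 2 : ℝ) * (((n + 1) / 2).choose 2 : ℝ)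
      - (((n / 2 : ℕ) : ℝ) - 1) * ((((n + 1) / 2 : ℕ) : ℝ) - 1) + 1
  else if n ≤ 30 then
    (10 : ℝ) ^ (((n : ℝ) - 1) / 5) + (((n : ℝ) + 144) / 30) * (6 : ℝ) ^ (((n : ℝ) - 6) / 5)
  else
    (10 : ℝ) ^ (((n : ℝ) - 1) / 5) + (((n : ℝ) - 1) / 5) * (6 : ℝ) ^ (((n : ℝ) - 6) / 5)


noncomputable def aa : ℝ := (10:ℝ) ^ ((1:ℝ)/5)
noncomputable def bb : ℝ := (6:ℝ) ^ ((1:ℝ)/5)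
noncomputable def tt : ℝ := aa / bb

lemma aa_pos : 0 < aa := Real.rpow_pos_of_pos (by norm_num) _
lemma bb_pos : 0 < bb := Real.rpow_pos_of_pos (by norm_num) _
lemma tt_pos : 0 < tt := div_pos aa_pos bb_pos

lemma ha5 : aa ^ 5 = 10 := by
  rw [aa, ← Real.rpow_natCast ((10:ℝ) ^ ((1:ℝ)/5)) 5, ← Real.rpow_mul (by norm_num)]; norm_num
lemma hb5 : bb ^ 5 = 6 := by
  rw [bb, ← Real.rpow_natCast ((6:ℝ) ^ ((1:ℝ)/5)) 5, ← Real.rpow_mul (by norm_num)]; norm_num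
lemma ht5 : tt ^ 5 = 5/3 := by rw [tt, div_pow, ha5, hb5]; norm_num

lemma aa_lb : 1.584 < aa :=
  lt_of_pow_lt_pow_left₀ 5 aa_pos.le (by rw [ha5]; norm_num)
lemma aa_ub : aa < 1.5849 :=
  lt_of_pow_lt_pow_left₀ 5 (by norm_num) (by rw [ha5]; norm_num)
lemma bb_lb : 1.43 < bb :=
  lt_of_pow_lt_pow_left₀ 5 bb_pos.le (by rw [hb5]; norm_num)
lemma bb_ub : bb < 1.4315 :=
  lt_of_pow_lt_pow_left₀ 5 (by norm_num) (by rw [hb5]; norm_num)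
lemma tt_lb : 1.1075 < tt :=
  lt_of_pow_lt_pow_left₀ 5 tt_pos.le (by rw [ht5]; norm_num)

lemma aa_eq (k : ℕ) : aa ^ k = tt ^ k * bb ^ k := by
  rw [tt, div_pow, div_mul_cancel₀]
  exact pow_ne_zero _ (ne_of_gt bb_pos)

lemma bern (k : ℕ) : 1 + (k:ℝ) * (tt - 1) ≤ tt ^ k := by
  have := one_add_mul_le_pow (a := tt - 1) (by nlinarith [tt_lb]) k
  simpa using this

lemma tt_lower (j : ℕ) : 2.2633 * (1 + (j:ℝ) * 0.107) ≤ tt ^ (j+8) := by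
  have h8 : (2.2633:ℝ) ≤ tt^8 := by
    have h : (1.1075:ℝ)^8 < tt^8 := pow_lt_pow_left₀ tt_lb (by norm_num) (by norm_num)
    nlinarith [h]
  have hj : (1:ℝ) + (j:ℝ)*0.107 ≤ tt^j := by
    have := bern j
    nlinarith [tt_lb, (Nat.cast_nonneg j : (0:ℝ) ≤ (j:ℝ))]
  rw [pow_add]
  nlinarith [mul_le_mul hj h8 (by norm_num) (pow_nonneg tt_pos.le j)]

lemma Alb (k : ℕ) (hk : 8 ≤ k) :
    2.2633 * (1 + ((k:ℝ)-8) * 0.107) * bb^k ≤ aa^k := by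
  obtain ⟨j, rfl⟩ : ∃ j, k = j+8 := ⟨k-8, by omega⟩
  rw [aa_eq]
  have h := tt_lower j
  have hc : ((j+8:ℕ):ℝ) - 8 = (j:ℝ) := by push_cast; ring
  rw [hc]
  nlinarith [pow_pos bb_pos (j+8), tt_lower j]

lemma aa3_ub : aa^3 < 3.9812 := by
  have h := pow_lt_pow_left₀ aa_ub aa_pos.le (three_ne_zero)
  nlinarith [h]
lemma aa3_lb : 3.97 < aa^3 := by
  have h := pow_lt_pow_left₀ aa_lb (by norm_num) (three_ne_zero)
  nlinarith [h]
lemma aa4_ub : aa^4 < 6.3097 := by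
  have h := pow_lt_pow_left₀ aa_ub aa_pos.le (four_ne_zero)
  nlinarith [h]
lemma aa4_lb : 6.295 < aa^4 := by
  have h := pow_lt_pow_left₀ aa_lb (by norm_num) (four_ne_zero)
  nlinarith [h]
lemma bb4_lb : 4.181 < bb^4 := by
  have h := pow_lt_pow_left₀ bb_lb (by norm_num) (four_ne_zero)
  nlinarith [h]
lemma bb4_ub : bb^4 < 4.1995 := by
  have h := pow_lt_pow_left₀ bb_ub bb_pos.le (four_ne_zero)
  nlinarith [h]
lemma va9 : aa^9 = 10*aa^4 := by rw [show aa^9 = aa^5*aa^4 by ring, ha5]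
lemma va10 : aa^10 = 100 := by rw [show aa^10 = (aa^5)^2 by ring, ha5]; norm_num
lemma va11 : aa^11 = 100*aa := by rw [show aa^11 = (aa^5)^2*aa by ring, ha5]; norm_num
lemma vb6 : bb^6 = 6*bb := by rw [show bb^6 = bb^5*bb by ring, hb5]

lemma core4mid (k : ℕ) (hk : 8 ≤ k) :
    3*(aa^(k+5) + (((k:ℝ)+150)/30) * bb^k) + 4*aa^(k+4) + aa^(k+3)
      < aa^(k+9) + (((k:ℝ)+9)/5) * bb^(k+4) := by
  have hkr : (8:ℝ) ≤ (k:ℝ) := by exact_mod_cast hk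
  have hb : (0:ℝ) < bb^k := pow_pos bb_pos k
  have hc : (3.78:ℝ) ≤ 6*aa^4 - aa^3 - 30 := by nlinarith [aa4_lb, aa3_ub]
  have key : 3.78 * (2.2633*(1+((k:ℝ)-8)*0.107) * bb^k) ≤ (6*aa^4-aa^3-30) * aa^k :=
    mul_le_mul hc (Alb k hk) (by nlinarith [hb, hkr]) (by linarith)
  simp only [pow_add, va9, ha5]
  nlinarith [key, hb, hkr,
    mul_nonneg (mul_nonneg (by linarith : (0:ℝ) ≤ (k:ℝ)+9) hb.le) (by nlinarith [bb4_lb] : (0:ℝ) ≤ bb^4 - 4.181),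
    mul_nonneg (by linarith : (0:ℝ) ≤ (k:ℝ)-8) hb.le]

lemma core4high (k : ℕ) (hk : 25 ≤ k) :
    3*(aa^(k+5) + (((k:ℝ)+5)/5) * bb^k) + 4*aa^(k+4) + aa^(k+3)
      < aa^(k+9) + (((k:ℝ)+9)/5) * bb^(k+4) := by
  have hk8 : 8 ≤ k := by omega
  have hkr : (25:ℝ) ≤ (k:ℝ) := by exact_mod_cast hk
  have hb : (0:ℝ) < bb^k := pow_pos bb_pos k
  have hc : (3.78:ℝ) ≤ 6*aa^4 - aa^3 - 30 := by nlinarith [aa4_lb, aa3_ub]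
  have key : 3.78 * (2.2633*(1+((k:ℝ)-8)*0.107) * bb^k) ≤ (6*aa^4-aa^3-30) * aa^k :=
    mul_le_mul hc (Alb k hk8) (by nlinarith [hb, hkr]) (by linarith)
  simp only [pow_add, va9, ha5]
  nlinarith [key, hb, hkr,
    mul_nonneg (mul_nonneg (by linarith : (0:ℝ) ≤ (k:ℝ)+9) hb.le) (by nlinarith [bb4_lb] : (0:ℝ) ≤ bb^4 - 4.181),
    mul_nonneg (by linarith : (0:ℝ) ≤ (k:ℝ)-8) hb.le]

lemma core5mid (k : ℕ) (hk : 8 ≤ k) :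
    6*(aa^(k+5) + (((k:ℝ)+150)/30) * bb^k) + 5*aa^(k+4) + aa^(k+3)
      < aa^(k+10) + (((k:ℝ)+10)/5) * bb^(k+5) := by
  have hkr : (8:ℝ) ≤ (k:ℝ) := by exact_mod_cast hk
  have hb : (0:ℝ) < bb^k := pow_pos bb_pos k
  have hc : (4.47:ℝ) ≤ 40 - 5*aa^4 - aa^3 := by nlinarith [aa4_ub, aa3_ub]
  have key : 4.47 * (2.2633*(1+((k:ℝ)-8)*0.107) * bb^k) ≤ (40-5*aa^4-aa^3) * aa^k :=
    mul_le_mul hc (Alb k hk) (by nlinarith [hb, hkr]) (by linarith)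
  simp only [pow_add, va10, ha5, hb5]
  nlinarith [key, hb, hkr,
    mul_nonneg (by linarith : (0:ℝ) ≤ (k:ℝ)-8) hb.le]

lemma core5high (k : ℕ) (hk : 25 ≤ k) :
    6*(aa^(k+5) + (((k:ℝ)+5)/5) * bb^k) + 5*aa^(k+4) + aa^(k+3)
      < aa^(k+10) + (((k:ℝ)+10)/5) * bb^(k+5) := by
  have hk8 : 8 ≤ k := by omega
  have hkr : (25:ℝ) ≤ (k:ℝ) := by exact_mod_cast hk
  have hb : (0:ℝ) < bb^k := pow_pos bb_pos k
  have hc : (4.47:ℝ) ≤ 40 - 5*aa^4 - aa^3 := by nlinarith [aa4_ub, aa3_ub]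
  have key : 4.47 * (2.2633*(1+((k:ℝ)-8)*0.107) * bb^k) ≤ (40-5*aa^4-aa^3) * aa^k :=
    mul_le_mul hc (Alb k hk8) (by nlinarith [hb, hkr]) (by linarith)
  simp only [pow_add, va10, ha5, hb5]
  nlinarith [key, hb, hkr,
    mul_nonneg (by linarith : (0:ℝ) ≤ (k:ℝ)-8) hb.le]

lemma core6mid (k : ℕ) (hk : 8 ≤ k) :
    10*(aa^(k+5) + (((k:ℝ)+150)/30) * bb^k) + 6*aa^(k+4) + aa^(k+3)
      < aa^(k+11) + (((k:ℝ)+11)/5) * bb^(k+6) := by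
  have hkr : (8:ℝ) ≤ (k:ℝ) := by exact_mod_cast hk
  have hb : (0:ℝ) < bb^k := pow_pos bb_pos k
  have hc : (16.5:ℝ) ≤ 100*aa - 100 - 6*aa^4 - aa^3 := by nlinarith [aa_lb, aa4_ub, aa3_ub]
  have key : 16.5 * (2.2633*(1+((k:ℝ)-8)*0.107) * bb^k) ≤ (100*aa-100-6*aa^4-aa^3) * aa^k :=
    mul_le_mul hc (Alb k hk) (by nlinarith [hb, hkr]) (by linarith)
  simp only [pow_add, va11, ha5, vb6]
  nlinarith [key, hb, hkr,
    mul_nonneg (mul_nonneg (by linarith : (0:ℝ) ≤ (k:ℝ)+11) hb.le) (by nlinarith [bb_lb] : (0:ℝ) ≤ bb - 1.43),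
    mul_nonneg (by linarith : (0:ℝ) ≤ (k:ℝ)-8) hb.le]

lemma core6high (k : ℕ) (hk : 25 ≤ k) :
    10*(aa^(k+5) + (((k:ℝ)+5)/5) * bb^k) + 6*aa^(k+4) + aa^(k+3)
      < aa^(k+11) + (((k:ℝ)+11)/5) * bb^(k+6) := by
  have hk8 : 8 ≤ k := by omega
  have hkr : (25:ℝ) ≤ (k:ℝ) := by exact_mod_cast hk
  have hb : (0:ℝ) < bb^k := pow_pos bb_pos k
  have hc : (16.5:ℝ) ≤ 100*aa - 100 - 6*aa^4 - aa^3 := by nlinarith [aa_lb, aa4_ub, aa3_ub]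
  have key : 16.5 * (2.2633*(1+((k:ℝ)-8)*0.107) * bb^k) ≤ (100*aa-100-6*aa^4-aa^3) * aa^k :=
    mul_le_mul hc (Alb k hk8) (by nlinarith [hb, hkr]) (by linarith)
  simp only [pow_add, va11, ha5, vb6]
  nlinarith [key, hb, hkr,
    mul_nonneg (mul_nonneg (by linarith : (0:ℝ) ≤ (k:ℝ)+11) hb.le) (by nlinarith [bb_lb] : (0:ℝ) ≤ bb - 1.43),
    mul_nonneg (by linarith : (0:ℝ) ≤ (k:ℝ)-8) hb.le]


lemma aa2_ub : aa^2 < 2.512 := by nlinarith [aa_ub, aa_pos]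
lemma aa2_lb : 2.509 < aa^2 := by nlinarith [aa_lb]
lemma bb2_ub : bb^2 < 2.0492 := by nlinarith [bb_ub, bb_pos]
lemma bb2_lb : 2.0449 < bb^2 := by nlinarith [bb_lb]
lemma bb3_ub : bb^3 < 2.9335 := by
  have h := pow_lt_pow_left₀ bb_ub bb_pos.le (three_ne_zero)
  nlinarith [h]
lemma bb3_lb : 2.924 < bb^3 := by
  have h := pow_lt_pow_left₀ bb_lb (by norm_num) (three_ne_zero)
  nlinarith [h]
lemma va6 : aa^6 = 10*aa := by rw [show aa^6 = aa^5*aa by ring, ha5]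
lemma va7 : aa^7 = 10*aa^2 := by rw [show aa^7 = aa^5*aa^2 by ring, ha5]
lemma va8 : aa^8 = 10*aa^3 := by rw [show aa^8 = aa^5*aa^3 by ring, ha5]
lemma va12 : aa^12 = 100*aa^2 := by rw [show aa^12 = (aa^5)^2*aa^2 by ring, ha5]; norm_num
lemma va13 : aa^13 = 100*aa^3 := by rw [show aa^13 = (aa^5)^2*aa^3 by ring, ha5]; norm_num
lemma va14 : aa^14 = 100*aa^4 := by rw [show aa^14 = (aa^5)^2*aa^4 by ring, ha5]; norm_num
lemma va15 : aa^15 = 1000 := by rw [show aa^15 = (aa^5)^3 by ring, ha5]; norm_num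
lemma va16 : aa^16 = 1000*aa := by rw [show aa^16 = (aa^5)^3*aa by ring, ha5]; norm_num
lemma va17 : aa^17 = 1000*aa^2 := by rw [show aa^17 = (aa^5)^3*aa^2 by ring, ha5]; norm_num
lemma va18 : aa^18 = 1000*aa^3 := by rw [show aa^18 = (aa^5)^3*aa^3 by ring, ha5]; norm_num
lemma vb7 : bb^7 = 6*bb^2 := by rw [show bb^7 = bb^5*bb^2 by ring, hb5]
lemma vb8 : bb^8 = 6*bb^3 := by rw [show bb^8 = bb^5*bb^3 by ring, hb5]
lemma vb9 : bb^9 = 6*bb^4 := by rw [show bb^9 = bb^5*bb^4 by ring, hb5]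
lemma vb10 : bb^10 = 36 := by rw [show bb^10 = (bb^5)^2 by ring, hb5]; norm_num
lemma vb11 : bb^11 = 36*bb := by rw [show bb^11 = (bb^5)^2*bb by ring, hb5]; norm_num
lemma vb12 : bb^12 = 36*bb^2 := by rw [show bb^12 = (bb^5)^2*bb^2 by ring, hb5]; norm_num
lemma vb13 : bb^13 = 36*bb^3 := by rw [show bb^13 = (bb^5)^2*bb^3 by ring, hb5]; norm_num

lemma ten_rpow (n : ℕ) : (10:ℝ) ^ ((n:ℝ)/5) = aa ^ n := by
  rw [aa, ← Real.rpow_natCast ((10:ℝ) ^ ((1:ℝ)/5)) n, ← Real.rpow_mul (by norm_num)]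
  ring_nf

lemma six_rpow (n : ℕ) : (6:ℝ) ^ ((n:ℝ)/5) = bb ^ n := by
  rw [bb, ← Real.rpow_natCast ((6:ℝ) ^ ((1:ℝ)/5)) n, ← Real.rpow_mul (by norm_num)]
  ring_nf

lemma g_eq (n : ℕ) : g n = aa ^ n := by rw [g, ten_rpow]

lemma f_mid (n : ℕ) (h1 : 14 ≤ n) (h2 : n ≤ 30) :
    f n = aa ^ (n-1) + (((n:ℝ)+144)/30) * bb ^ (n-6) := by
  rw [f, if_neg (by omega), if_neg (by omega), if_pos h2,
    show ((n:ℝ)-1)/5 = (((n-1:ℕ)):ℝ)/5 by rw [Nat.cast_sub (by omega)]; norm_num,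
    show ((n:ℝ)-6)/5 = (((n-6:ℕ)):ℝ)/5 by rw [Nat.cast_sub (by omega)]; norm_num,
    ten_rpow, six_rpow]

lemma f_high (n : ℕ) (h1 : 31 ≤ n) :
    f n = aa ^ (n-1) + (((n:ℝ)-1)/5) * bb ^ (n-6) := by
  rw [f, if_neg (by omega), if_neg (by omega), if_neg (by omega),
    show ((n:ℝ)-1)/5 = (((n-1:ℕ)):ℝ)/5 by rw [Nat.cast_sub (by omega)]; norm_num,
    show ((n:ℝ)-6)/5 = (((n-6:ℕ)):ℝ)/5 by rw [Nat.cast_sub (by omega)]; norm_num,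
    ten_rpow, six_rpow]

lemma f_lb (n : ℕ) (h1 : 14 ≤ n) :
    aa ^ (n-1) + (((n:ℝ)-1)/5) * bb ^ (n-6) ≤ f n := by
  rcases le_or_gt n 30 with h2 | h2
  · rw [f_mid n h1 h2]
    have : (((n:ℝ)-1)/5) ≤ ((n:ℝ)+144)/30 := by
      have : (n:ℝ) ≤ 30 := by exact_mod_cast h2
      linarith
    nlinarith [pow_pos bb_pos (n-6), pow_nonneg bb_pos.le (n-6)]
  · rw [f_high n (by omega)]


set_option maxHeartbeats 4000000 in
theorem ineq_pendant_two (n r : ℕ) (hn : 14 ≤ n) (hr : r ∈ ({4, 5, 6} : Set ℕ))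
    (h : 1 ≤ n - r - 3) :
    ((r - 1).choose 2 : ℝ) * f (n - r) + (r : ℝ) * g (n - r - 2) + g (n - r - 3)
      < f n := by
  simp only [Set.mem_insert_iff, Set.mem_singleton_iff] at hr
  rcases hr with rfl | rfl | rfl
  · -- r = 4
    rcases le_or_gt n 17 with hc | hc
    · interval_cases n
      · rw [f_mid 14 (by norm_num) (by norm_num)]
        norm_num [f, g_eq, Nat.choose]
        simp only [ha5, va6, va7, va8, va9, va10, va11, va12, va13, va14, va15, va16, va17, va18, hb5, vb6, vb7, vb8, vb9, vb10, vb11, vb12, vb13]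
        linarith [aa_lb, aa_ub, aa2_lb, aa2_ub, aa3_lb, aa3_ub, aa4_lb, aa4_ub, bb_lb, bb_ub, bb2_lb, bb2_ub, bb3_lb, bb3_ub, bb4_lb, bb4_ub]
      · rw [f_mid 15 (by norm_num) (by norm_num)]
        norm_num [f, g_eq, Nat.choose]
        simp only [ha5, va6, va7, va8, va9, va10, va11, va12, va13, va14, va15, va16, va17, va18, hb5, vb6, vb7, vb8, vb9, vb10, vb11, vb12, vb13]
        linarith [aa_lb, aa_ub, aa2_lb, aa2_ub, aa3_lb, aa3_ub, aa4_lb, aa4_ub, bb_lb, bb_ub, bb2_lb, bb2_ub, bb3_lb, bb3_ub, bb4_lb, bb4_ub]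
      · rw [f_mid 16 (by norm_num) (by norm_num)]
        norm_num [f, g_eq, Nat.choose]
        simp only [ha5, va6, va7, va8, va9, va10, va11, va12, va13, va14, va15, va16, va17, va18, hb5, vb6, vb7, vb8, vb9, vb10, vb11, vb12, vb13]
        linarith [aa_lb, aa_ub, aa2_lb, aa2_ub, aa3_lb, aa3_ub, aa4_lb, aa4_ub, bb_lb, bb_ub, bb2_lb, bb2_ub, bb3_lb, bb3_ub, bb4_lb, bb4_ub]
      · rw [f_mid 17 (by norm_num) (by norm_num)]
        norm_num [f, g_eq, Nat.choose]
        simp only [ha5, va6, va7, va8, va9, va10, va11, va12, va13, va14, va15, va16, va17, va18, hb5, vb6, vb7, vb8, vb9, vb10, vb11, vb12, vb13]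
        linarith [aa_lb, aa_ub, aa2_lb, aa2_ub, aa3_lb, aa3_ub, aa4_lb, aa4_ub, bb_lb, bb_ub, bb2_lb, bb2_ub, bb3_lb, bb3_ub, bb4_lb, bb4_ub]
    · obtain ⟨k, rfl⟩ : ∃ k, n = k + 10 := ⟨n - 10, by omega⟩
      have hk : 8 ≤ k := by omega
      refine lt_of_lt_of_le ?_ (f_lb (k+10) (by omega))
      rw [show k+10-4 = k+6 from by omega, show k+6-2 = k+4 from by omega,
          show k+6-3 = k+3 from by omega, show k+10-1 = k+9 from by omega,
          show k+10-6 = k+4 from by omega, g_eq, g_eq]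
      rcases le_or_gt k 24 with hmid | hhigh
      · rw [f_mid (k+6) (by omega) (by omega), show k+6-1 = k+5 from by omega,
            show k+6-6 = k from by omega]
        norm_num [Nat.choose]
        push_cast
        linarith [core4mid k hk]
      · rw [f_high (k+6) (by omega), show k+6-1 = k+5 from by omega,
            show k+6-6 = k from by omega]
        norm_num [Nat.choose]
        push_cast
        linarith [core4high k (by omega)]
  · -- r = 5
    rcases le_or_gt n 18 with hc | hc
    · interval_cases n
      · rw [f_mid 14 (by norm_num) (by norm_num)]
        norm_num [f, g_eq, Nat.choose]
        simp only [ha5, va6, va7, va8, va9, va10, va11, va12, va13, va14, va15, va16, va17, va18, hb5, vb6, vb7, vb8, vb9, vb10, vb11, vb12, vb13]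
        linarith [aa_lb, aa_ub, aa2_lb, aa2_ub, aa3_lb, aa3_ub, aa4_lb, aa4_ub, bb_lb, bb_ub, bb2_lb, bb2_ub, bb3_lb, bb3_ub, bb4_lb, bb4_ub]
      · rw [f_mid 15 (by norm_num) (by norm_num)]
        norm_num [f, g_eq, Nat.choose]
        simp only [ha5, va6, va7, va8, va9, va10, va11, va12, va13, va14, va15, va16, va17, va18, hb5, vb6, vb7, vb8, vb9, vb10, vb11, vb12, vb13]
        linarith [aa_lb, aa_ub, aa2_lb, aa2_ub, aa3_lb, aa3_ub, aa4_lb, aa4_ub, bb_lb, bb_ub, bb2_lb, bb2_ub, bb3_lb, bb3_ub, bb4_lb, bb4_ub]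
      · rw [f_mid 16 (by norm_num) (by norm_num)]
        norm_num [f, g_eq, Nat.choose]
        simp only [ha5, va6, va7, va8, va9, va10, va11, va12, va13, va14, va15, va16, va17, va18, hb5, vb6, vb7, vb8, vb9, vb10, vb11, vb12, vb13]
        linarith [aa_lb, aa_ub, aa2_lb, aa2_ub, aa3_lb, aa3_ub, aa4_lb, aa4_ub, bb_lb, bb_ub, bb2_lb, bb2_ub, bb3_lb, bb3_ub, bb4_lb, bb4_ub]
      · rw [f_mid 17 (by norm_num) (by norm_num)]
        norm_num [f, g_eq, Nat.choose]
        simp only [ha5, va6, va7, va8, va9, va10, va11, va12, va13, va14, va15, va16, va17, va18, hb5, vb6, vb7, vb8, vb9, vb10, vb11, vb12, vb13]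
        linarith [aa_lb, aa_ub, aa2_lb, aa2_ub, aa3_lb, aa3_ub, aa4_lb, aa4_ub, bb_lb, bb_ub, bb2_lb, bb2_ub, bb3_lb, bb3_ub, bb4_lb, bb4_ub]
      · rw [f_mid 18 (by norm_num) (by norm_num)]
        norm_num [f, g_eq, Nat.choose]
        simp only [ha5, va6, va7, va8, va9, va10, va11, va12, va13, va14, va15, va16, va17, va18, hb5, vb6, vb7, vb8, vb9, vb10, vb11, vb12, vb13]
        linarith [aa_lb, aa_ub, aa2_lb, aa2_ub, aa3_lb, aa3_ub, aa4_lb, aa4_ub, bb_lb, bb_ub, bb2_lb, bb2_ub, bb3_lb, bb3_ub, bb4_lb, bb4_ub]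
    · obtain ⟨k, rfl⟩ : ∃ k, n = k + 11 := ⟨n - 11, by omega⟩
      have hk : 8 ≤ k := by omega
      refine lt_of_lt_of_le ?_ (f_lb (k+11) (by omega))
      rw [show k+11-5 = k+6 from by omega, show k+6-2 = k+4 from by omega,
          show k+6-3 = k+3 from by omega, show k+11-1 = k+10 from by omega,
          show k+11-6 = k+5 from by omega, g_eq, g_eq]
      rcases le_or_gt k 24 with hmid | hhigh
      · rw [f_mid (k+6) (by omega) (by omega), show k+6-1 = k+5 from by omega,
            show k+6-6 = k from by omega]
        norm_num [Nat.choose]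
        push_cast
        linarith [core5mid k hk]
      · rw [f_high (k+6) (by omega), show k+6-1 = k+5 from by omega,
            show k+6-6 = k from by omega]
        norm_num [Nat.choose]
        push_cast
        linarith [core5high k (by omega)]
  · -- r = 6
    rcases le_or_gt n 19 with hc | hc
    · interval_cases n
      · rw [f_mid 14 (by norm_num) (by norm_num)]
        norm_num [f, g_eq, Nat.choose]
        simp only [ha5, va6, va7, va8, va9, va10, va11, va12, va13, va14, va15, va16, va17, va18, hb5, vb6, vb7, vb8, vb9, vb10, vb11, vb12, vb13]
        linarith [aa_lb, aa_ub, aa2_lb, aa2_ub, aa3_lb, aa3_ub, aa4_lb, aa4_ub, bb_lb, bb_ub, bb2_lb, bb2_ub, bb3_lb, bb3_ub, bb4_lb, bb4_ub]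
      · rw [f_mid 15 (by norm_num) (by norm_num)]
        norm_num [f, g_eq, Nat.choose]
        simp only [ha5, va6, va7, va8, va9, va10, va11, va12, va13, va14, va15, va16, va17, va18, hb5, vb6, vb7, vb8, vb9, vb10, vb11, vb12, vb13]
        linarith [aa_lb, aa_ub, aa2_lb, aa2_ub, aa3_lb, aa3_ub, aa4_lb, aa4_ub, bb_lb, bb_ub, bb2_lb, bb2_ub, bb3_lb, bb3_ub, bb4_lb, bb4_ub]
      · rw [f_mid 16 (by norm_num) (by norm_num)]
        norm_num [f, g_eq, Nat.choose]
        simp only [ha5, va6, va7, va8, va9, va10, va11, va12, va13, va14, va15, va16, va17, va18, hb5, vb6, vb7, vb8, vb9, vb10, vb11, vb12, vb13]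
        linarith [aa_lb, aa_ub, aa2_lb, aa2_ub, aa3_lb, aa3_ub, aa4_lb, aa4_ub, bb_lb, bb_ub, bb2_lb, bb2_ub, bb3_lb, bb3_ub, bb4_lb, bb4_ub]
      · rw [f_mid 17 (by norm_num) (by norm_num)]
        norm_num [f, g_eq, Nat.choose]
        simp only [ha5, va6, va7, va8, va9, va10, va11, va12, va13, va14, va15, va16, va17, va18, hb5, vb6, vb7, vb8, vb9, vb10, vb11, vb12, vb13]
        linarith [aa_lb, aa_ub, aa2_lb, aa2_ub, aa3_lb, aa3_ub, aa4_lb, aa4_ub, bb_lb, bb_ub, bb2_lb, bb2_ub, bb3_lb, bb3_ub, bb4_lb, bb4_ub]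
      · rw [f_mid 18 (by norm_num) (by norm_num)]
        norm_num [f, g_eq, Nat.choose]
        simp only [ha5, va6, va7, va8, va9, va10, va11, va12, va13, va14, va15, va16, va17, va18, hb5, vb6, vb7, vb8, vb9, vb10, vb11, vb12, vb13]
        linarith [aa_lb, aa_ub, aa2_lb, aa2_ub, aa3_lb, aa3_ub, aa4_lb, aa4_ub, bb_lb, bb_ub, bb2_lb, bb2_ub, bb3_lb, bb3_ub, bb4_lb, bb4_ub]
      · rw [f_mid 19 (by norm_num) (by norm_num)]
        norm_num [f, g_eq, Nat.choose]
        simp only [ha5, va6, va7, va8, va9, va10, va11, va12, va13, va14, va15, va16, va17, va18, hb5, vb6, vb7, vb8, vb9, vb10, vb11, vb12, vb13]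
        linarith [aa_lb, aa_ub, aa2_lb, aa2_ub, aa3_lb, aa3_ub, aa4_lb, aa4_ub, bb_lb, bb_ub, bb2_lb, bb2_ub, bb3_lb, bb3_ub, bb4_lb, bb4_ub]
    · obtain ⟨k, rfl⟩ : ∃ k, n = k + 12 := ⟨n - 12, by omega⟩
      have hk : 8 ≤ k := by omega
      refine lt_of_lt_of_le ?_ (f_lb (k+12) (by omega))
      rw [show k+12-6 = k+6 from by omega, show k+6-2 = k+4 from by omega,
          show k+6-3 = k+3 from by omega, show k+12-1 = k+11 from by omega,
          g_eq, g_eq]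
      rcases le_or_gt k 24 with hmid | hhigh
      · rw [f_mid (k+6) (by omega) (by omega), show k+6-1 = k+5 from by omega,
            show k+6-6 = k from by omega]
        norm_num [Nat.choose]
        push_cast
        linarith [core6mid k hk]
      · rw [f_high (k+6) (by omega), show k+6-1 = k+5 from by omega,
            show k+6-6 = k from by omega]
        norm_num [Nat.choose]
        push_cast
        linarith [core6high k (by omega)]
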